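/- Let R be a linearly ordered field in which every nonnegative element is a square. Then for every nonzero Laurent series α ∈ R((X)) there exists β ∈ R((T)) such that β² equals the image of α under the field homomorphism τ₂ : R((X)) → R((T)) sending X to T², or β² equals the negative of that image. -/

import Mathlib

/-- The field homomorphism `K((X)) → K((T))` sending `Σ aᵢ Xⁱ` to `Σ aᵢ T^(m·i)`,
i.e. substitution of `T^m` for `X`. -/
noncomputable def LaurentSeries.substPow (R : Type*) [CommRing R] (m : ℕ+) :
    LaurentSeries R →+* LaurentSeries R :=
  HahnSeries.embDomainRingHom (AddMonoidHom.mulLeft (m : ℤ))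
    (fun _ _ h => by
      simpa using mul_left_cancel₀ (a := (m : ℤ)) (by exact_mod_cast m.ne_zero) h)
    (fun _ _ => mul_le_mul_iff_of_pos_left (by exact_mod_cast m.pos))

noncomputable def sqCoeff {R : Type*} [Field R] (q : ℕ → R) : ℕ → R
  | 0 => 1
  | (n+1) => (q (n+1) - ∑ i ∈ (Finset.range n).attach, sqCoeff q (i+1) * sqCoeff q (n-i)) / 2
  decreasing_by
  · have := i.2; rw [Finset.mem_range] at this; omega
  · have := i.2; rw [Finset.mem_range] at this; omega

lemma powerSeries_sqrt {R : Type*} [Field R] [LinearOrder R] [IsStrictOrderedRing R] (q : PowerSeries R)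
    (hq : PowerSeries.constantCoeff q = 1) : ∃ s : PowerSeries R, s ^ 2 = q := by
  classical
  set f : ℕ → R := fun n => PowerSeries.coeff n q with hf
  refine ⟨PowerSeries.mk (sqCoeff f), ?_⟩
  ext n
  rw [pow_two, PowerSeries.coeff_mul, Finset.Nat.sum_antidiagonal_eq_sum_range_succ_mk]
  cases n with
  | zero =>
    simp [sqCoeff, hq]
  | succ n =>
    rw [Finset.sum_range_succ, Finset.sum_range_succ']
    have hmid : ∀ i ∈ Finset.range n,
        (PowerSeries.coeff (i+1) (PowerSeries.mk (sqCoeff f))) *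
          (PowerSeries.coeff (n+1-(i+1)) (PowerSeries.mk (sqCoeff f)))
        = sqCoeff f (i+1) * sqCoeff f (n-i) := by
      intro i hi
      simp only [PowerSeries.coeff_mk]
      congr 2
      omega
    rw [Finset.sum_congr rfl hmid]
    have hM : (∑ i ∈ (Finset.range n).attach, sqCoeff f (i+1) * sqCoeff f (n-i))
        = ∑ i ∈ Finset.range n, sqCoeff f (i+1) * sqCoeff f (n-i) :=
      Finset.sum_attach _ (fun i => sqCoeff f (i+1) * sqCoeff f (n-i))
    have hs : sqCoeff f (n+1)
        = (f (n+1) - ∑ i ∈ Finset.range n, sqCoeff f (i+1) * sqCoeff f (n-i)) / 2 := by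
      rw [sqCoeff, hM]
    have h0 : sqCoeff f 0 = 1 := by rw [sqCoeff]
    simp only [PowerSeries.coeff_mk, Nat.sub_zero, Nat.sub_self]
    rw [h0, hs]
    field_simp
    ring


lemma substPow_single {R : Type*} [CommRing R] (d : ℤ) (r : R) :
    LaurentSeries.substPow R 2 (HahnSeries.single d r) = HahnSeries.single (2 * d) r := by
  rw [LaurentSeries.substPow]; erw [HahnSeries.embDomainRingHom_apply, HahnSeries.embDomain_single]
  rfl

lemma aux_pos {R : Type*} [Field R] [LinearOrder R] [IsStrictOrderedRing R]
    (hsq : ∀ x : R, 0 ≤ x → ∃ y : R, y ^ 2 = x)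
    (α : LaurentSeries R) (d : ℤ) (P : PowerSeries R)
    (hdec : α = (HahnSeries.single d 1 : LaurentSeries R) * (P : LaurentSeries R))
    (hc : 0 < PowerSeries.constantCoeff P) :
    ∃ β : LaurentSeries R, β ^ 2 = LaurentSeries.substPow R 2 α := by
  set c := PowerSeries.constantCoeff P with hcdef
  obtain ⟨e, he⟩ := hsq c hc.le
  obtain ⟨s, hs⟩ := powerSeries_sqrt (PowerSeries.C c⁻¹ * P)
    (by simp [inv_mul_cancel₀ hc.ne']; exact inv_mul_cancel₀ hc.ne')
  have hP : P = (PowerSeries.C e * s) ^ 2 := by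
    rw [mul_pow, hs, ← mul_assoc, ← map_pow, he, ← map_mul, mul_inv_cancel₀ hc.ne', map_one,
      one_mul]
  refine ⟨HahnSeries.single d 1 *
    LaurentSeries.substPow R 2 ((PowerSeries.C e * s : PowerSeries R) : LaurentSeries R), ?_⟩
  rw [mul_pow, ← map_pow (LaurentSeries.substPow R 2), ← map_pow (HahnSeries.ofPowerSeries ℤ R),
    ← hP, hdec, map_mul, substPow_single, pow_two, HahnSeries.single_mul_single, one_mul, two_mul]

lemma neg_decomp {R : Type*} [Field R] [LinearOrder R] [IsStrictOrderedRing R] (x : LaurentSeries R) (d : ℤ)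
    (P : PowerSeries R)
    (h : x = (HahnSeries.single d 1 : LaurentSeries R) * (HahnSeries.ofPowerSeries ℤ R P)) :
    -x = (HahnSeries.single d 1 : LaurentSeries R) * (HahnSeries.ofPowerSeries ℤ R (-P)) := by
  rw [h, map_neg (HahnSeries.ofPowerSeries ℤ R)]
  exact (mul_neg ((HahnSeries.single d 1 : LaurentSeries R)) (HahnSeries.ofPowerSeries ℤ R P)).symm

/-- Over a linearly ordered field in which every nonnegative element is a square, every nonzero
Laurent series `α` has, after the substitution `X ↦ T²`, a square root up to sign. -/
theorem statement9 {R : Type*} [Field R] [LinearOrder R] [IsStrictOrderedRing R]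
    (hsq : ∀ x : R, 0 ≤ x → ∃ y : R, y ^ 2 = x)
    (α : LaurentSeries R) (hα : α ≠ 0) :
    ∃ β : LaurentSeries R,
      β ^ 2 = LaurentSeries.substPow R 2 α ∨ β ^ 2 = -(LaurentSeries.substPow R 2 α) := by
  have hdec : α = (HahnSeries.single α.order 1 : LaurentSeries R) *
      (HahnSeries.ofPowerSeries ℤ R α.powerSeriesPart) :=
    (LaurentSeries.single_order_mul_powerSeriesPart α).symm
  have hc0 : PowerSeries.constantCoeff α.powerSeriesPart ≠ 0 := by
    rw [← PowerSeries.coeff_zero_eq_constantCoeff_apply,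
      LaurentSeries.powerSeriesPart_coeff]
    simpa using (HahnSeries.coeff_order_eq_zero.not.mpr hα)
  rcases hc0.lt_or_gt with hneg | hpos
  · have hdecneg := neg_decomp α α.order α.powerSeriesPart hdec
    obtain ⟨β, hβ⟩ := aux_pos hsq (-α) α.order (-α.powerSeriesPart) hdecneg (by simpa using hneg)
    exact ⟨β, Or.inr (hβ.trans (RingHom.map_neg (LaurentSeries.substPow R 2) α))⟩
  · obtain ⟨β, hβ⟩ := aux_pos hsq α α.order α.powerSeriesPart hdec hpos
    exact ⟨β, Or.inl hβ⟩
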